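/- For every n ≥ 2 and 1 ≤ m ≤ n², ψ_n(m) ≥ √m, with equality if and only if there exist integers a, b with 1 ≤ a ≤ n, 1 ≤ b ≤ n and m = ab (i.e., Z_n(m) contains a matrix of rank 1). -/

import Mathlib

open Matrix BigOperators

/-- The (unordered) singular values of a complex matrix `A`: square roots of the
eigenvalues of `Aᴴ * A`. -/
noncomputable def singVals {m n : ℕ} (A : Matrix (Fin m) (Fin n) ℂ) : Fin n → ℝ :=
  fun i => Real.sqrt ((Matrix.isHermitian_conjTranspose_mul_self A).eigenvalues i)

/-- The trace norm: sum of the singular values. -/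
noncomputable def traceNorm {m n : ℕ} (A : Matrix (Fin m) (Fin n) ℂ) : ℝ :=
  ∑ i, singVals A i

/-- The Frobenius norm. -/
noncomputable def frobNorm {m n : ℕ} (A : Matrix (Fin m) (Fin n) ℂ) : ℝ :=
  Real.sqrt (∑ i, ∑ j, ‖A i j‖ ^ 2)

/-- `sigma A k` is the `k`-th largest singular value of `A` (1-indexed), `0` if out of range. -/
noncomputable def sigma {m n : ℕ} (A : Matrix (Fin m) (Fin n) ℂ) (k : ℕ) : ℝ :=
  if h : 1 ≤ k ∧ k ≤ n then
    singVals A (Tuple.sort (singVals A) ⟨n - k, by omega⟩)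
  else 0

/-- Number of entries of `A` equal to `1`. -/
noncomputable def onesCount {a b : ℕ} (A : Matrix (Fin a) (Fin b) ℂ) : ℕ := by
  classical
  exact Finset.card (Finset.univ.filter fun p : Fin a × Fin b => A p.1 p.2 = 1)

/-- Minimum trace norm of an `n × n` (0,1)-matrix with exactly `m` ones. -/
noncomputable def psi (n m : ℕ) : ℝ :=
  sInf {x | ∃ A : Matrix (Fin n) (Fin n) ℂ, (∀ i j, A i j = 0 ∨ A i j = 1) ∧
    onesCount A = m ∧ traceNorm A = x}

lemma lam_nonneg {m n : ℕ} (A : Matrix (Fin m) (Fin n) ℂ) (i : Fin n) :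
    0 ≤ (Matrix.isHermitian_conjTranspose_mul_self A).eigenvalues i :=
  Matrix.eigenvalues_conjTranspose_mul_self_nonneg A i

lemma singVals_nonneg {m n : ℕ} (A : Matrix (Fin m) (Fin n) ℂ) (i : Fin n) :
    0 ≤ singVals A i := Real.sqrt_nonneg _

lemma singVals_sq {m n : ℕ} (A : Matrix (Fin m) (Fin n) ℂ) (i : Fin n) :
    singVals A i ^ 2 = (Matrix.isHermitian_conjTranspose_mul_self A).eigenvalues i :=
  Real.sq_sqrt (lam_nonneg A i)

lemma sum_eigs_eq {m n : ℕ} (A : Matrix (Fin m) (Fin n) ℂ) :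
    ∑ i, (Matrix.isHermitian_conjTranspose_mul_self A).eigenvalues i
      = ∑ i, ∑ j, ‖A i j‖ ^ 2 := by
  set hA := Matrix.isHermitian_conjTranspose_mul_self A with hhA
  have h1 : (Aᴴ * A).trace = ∑ i, ((hA.eigenvalues i : ℂ)) := by
    conv_lhs => rw [hA.spectral_theorem]
    rw [Unitary.conjStarAlgAut_apply, Matrix.trace_mul_cycle]
    rw [Unitary.coe_star_mul_self]
    rw [Matrix.one_mul, Matrix.trace_diagonal]
    rfl
  have h2 : (Aᴴ * A).trace = ((∑ i, ∑ j, ‖A i j‖ ^ 2 : ℝ) : ℂ) := by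
    rw [Matrix.trace]
    push_cast
    rw [Finset.sum_comm]
    congr 1; ext j
    rw [Matrix.diag_apply, Matrix.mul_apply]
    congr 1; ext i
    rw [Matrix.conjTranspose_apply]
    rw [show (star (A i j)) = (starRingEnd ℂ) (A i j) from rfl,
      ← Complex.normSq_eq_conj_mul_self, Complex.normSq_eq_norm_sq]
    push_cast
    ring
  have := h1.symm.trans h2
  exact_mod_cast this

lemma frobNorm_sq_eq {m n : ℕ} (A : Matrix (Fin m) (Fin n) ℂ) :
    frobNorm A = Real.sqrt (∑ i, singVals A i ^ 2) := by
  rw [frobNorm, ← sum_eigs_eq]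
  congr 1
  exact (Finset.sum_congr rfl fun i _ => (singVals_sq A i)).symm

lemma frobNorm_le_traceNorm {m n : ℕ} (A : Matrix (Fin m) (Fin n) ℂ) :
    frobNorm A ≤ traceNorm A := by
  rw [frobNorm_sq_eq, traceNorm]
  have h1 : ∑ i, singVals A i ^ 2 ≤ (∑ i, singVals A i) ^ 2 :=
    Finset.sum_sq_le_sq_sum_of_nonneg fun i _ => singVals_nonneg A i
  calc Real.sqrt (∑ i, singVals A i ^ 2) ≤ Real.sqrt ((∑ i, singVals A i) ^ 2) :=
        Real.sqrt_le_sqrt h1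
    _ = ∑ i, singVals A i := Real.sqrt_sq (Finset.sum_nonneg fun i _ => singVals_nonneg A i)

lemma singVals_ne_zero_iff {m n : ℕ} (A : Matrix (Fin m) (Fin n) ℂ) (i : Fin n) :
    singVals A i ≠ 0 ↔ (Matrix.isHermitian_conjTranspose_mul_self A).eigenvalues i ≠ 0 := by
  rw [singVals, Real.sqrt_ne_zero (lam_nonneg A i)]

lemma rank_eq_card {m n : ℕ} (A : Matrix (Fin m) (Fin n) ℂ) :
    A.rank = Fintype.card
      {i // (Matrix.isHermitian_conjTranspose_mul_self A).eigenvalues i ≠ 0} := by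
  open scoped ComplexOrder in
  rw [← Matrix.rank_conjTranspose_mul_self A]
  exact (Matrix.isHermitian_conjTranspose_mul_self A).rank_eq_card_non_zero_eigs

lemma traceNorm_eq_frobNorm_of_rank_le_one {m n : ℕ} (A : Matrix (Fin m) (Fin n) ℂ)
    (h : A.rank ≤ 1) : traceNorm A = frobNorm A := by
  classical
  have hcard : Fintype.card
      {i // (Matrix.isHermitian_conjTranspose_mul_self A).eigenvalues i ≠ 0} ≤ 1 := by
    rw [← rank_eq_card]; exact h
  set s := Finset.univ.filter fun i : Fin n => singVals A i ≠ 0 with hs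
  have hscard : s.card ≤ 1 := by
    refine Finset.card_le_one.mpr fun a ha b hb => ?_
    simp only [hs, Finset.mem_filter] at ha hb
    have ha' := (singVals_ne_zero_iff A a).mp ha.2
    have hb' := (singVals_ne_zero_iff A b).mp hb.2
    have := Fintype.card_le_one_iff.mp hcard ⟨a, ha'⟩ ⟨b, hb'⟩
    exact congrArg Subtype.val this
  have hsum1 : traceNorm A = ∑ i ∈ s, singVals A i := by
    rw [traceNorm]
    refine (Finset.sum_subset (Finset.subset_univ s) fun i _ hi => ?_).symm
    simp only [hs, Finset.mem_filter, Finset.mem_univ, true_and, not_not] at hi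
    exact hi
  have hsum2 : ∑ i, singVals A i ^ 2 = ∑ i ∈ s, singVals A i ^ 2 := by
    refine (Finset.sum_subset (Finset.subset_univ s) fun i _ hi => ?_).symm
    simp only [hs, Finset.mem_filter, Finset.mem_univ, true_and, not_not] at hi
    simp [hi]
  rw [frobNorm_sq_eq, hsum1, hsum2]
  rcases s.eq_empty_or_nonempty with h | ⟨x, hx⟩
  · rw [h]; simp
  · have h : s = {x} := Finset.eq_singleton_iff_unique_mem.mpr
      ⟨hx, fun y hy => Finset.card_le_one.mp hscard y hy x hx⟩
    rw [h]; simp only [Finset.sum_singleton]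
    exact (Real.sqrt_sq (singVals_nonneg A x)).symm

lemma rank_le_one_of_sq_eq {m n : ℕ} (A : Matrix (Fin m) (Fin n) ℂ)
    (heq : (∑ i, singVals A i) ^ 2 = ∑ i, singVals A i ^ 2) : A.rank ≤ 1 := by
  classical
  have hexp : (∑ i, singVals A i) ^ 2
      = ∑ i, (singVals A i ^ 2 + ∑ j ∈ Finset.univ.erase i, singVals A i * singVals A j) := by
    rw [sq, Finset.sum_mul_sum]
    refine Finset.sum_congr rfl fun i _ => ?_
    rw [← Finset.sum_erase_add _ _ (Finset.mem_univ i)]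
    ring
  rw [hexp, Finset.sum_add_distrib] at heq
  have hzero : ∑ i, ∑ j ∈ Finset.univ.erase i, singVals A i * singVals A j = 0 := by
    nlinarith [heq]
  have hterm : ∀ i : Fin n, ∀ j ∈ Finset.univ.erase i,
      singVals A i * singVals A j = 0 := by
    intro i j hj
    have h1 := (Finset.sum_eq_zero_iff_of_nonneg fun i _ =>
      Finset.sum_nonneg fun j _ => mul_nonneg (singVals_nonneg A i) (singVals_nonneg A j)).mp
      hzero i (Finset.mem_univ i)
    exact (Finset.sum_eq_zero_iff_of_nonneg fun j _ =>
      mul_nonneg (singVals_nonneg A i) (singVals_nonneg A j)).mp h1 j hj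
  rw [rank_eq_card]
  rw [Fintype.card_le_one_iff]
  rintro ⟨i, hi⟩ ⟨j, hj⟩
  refine Subtype.ext ?_
  by_contra hij
  have hsi : singVals A i ≠ 0 := (singVals_ne_zero_iff A i).mpr hi
  have hsj : singVals A j ≠ 0 := (singVals_ne_zero_iff A j).mpr hj
  have := hterm i j (Finset.mem_erase.mpr ⟨fun hh => hij hh.symm, Finset.mem_univ j⟩)
  rcases mul_eq_zero.mp this with h | h
  · exact hsi h
  · exact hsj h

lemma onesCount_eq {a b : ℕ} (A : Matrix (Fin a) (Fin b) ℂ)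
    [DecidablePred fun p : Fin a × Fin b => A p.1 p.2 = 1] :
    onesCount A = Finset.card (Finset.univ.filter fun p : Fin a × Fin b => A p.1 p.2 = 1) := by
  rw [onesCount]
  congr 1
  apply Finset.filter_congr_decidable

lemma card_filter_lt {n : ℕ} (a : ℕ) (ha : a ≤ n) :
    (Finset.univ.filter fun i : Fin n => (i : ℕ) < a).card = a := by
  classical
  have h : (Finset.univ.filter fun i : Fin n => (i : ℕ) < a)
      = Finset.univ.map (Fin.castLEEmb ha) := by
    ext i
    simp only [Finset.mem_filter, Finset.mem_univ, true_and, Finset.mem_map]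
    constructor
    · intro h
      exact ⟨⟨i, h⟩, by ext; rfl⟩
    · rintro ⟨k, rfl⟩
      exact k.2
  rw [h, Finset.card_map, Finset.card_univ, Fintype.card_fin]

lemma sum_abs_sq_eq_onesCount {a b : ℕ} (A : Matrix (Fin a) (Fin b) ℂ)
    (h01 : ∀ i j, A i j = 0 ∨ A i j = 1) :
    ∑ i, ∑ j, ‖A i j‖ ^ 2 = (onesCount A : ℝ) := by
  classical
  have h : ∀ i j, ‖A i j‖ ^ 2 = if A i j = 1 then (1:ℝ) else 0 := by
    intro i j
    rcases h01 i j with h | h <;> simp [h]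
  simp_rw [h]
  rw [← Finset.sum_product', Finset.univ_product_univ, onesCount, Finset.sum_boole]

lemma exists_ab {n : ℕ} (A : Matrix (Fin n) (Fin n) ℂ)
    (h01 : ∀ i j, A i j = 0 ∨ A i j = 1) (hrank : A.rank ≤ 1)
    (hm : 1 ≤ onesCount A) :
    ∃ a b : ℕ, 1 ≤ a ∧ a ≤ n ∧ 1 ≤ b ∧ b ≤ n ∧ onesCount A = a * b := by
  classical
  set W := LinearMap.range (Aᵀ.mulVecLin) with hW
  have hfin : Module.finrank ℂ ↥W ≤ 1 := by
    have h2 : Aᵀ.rank ≤ 1 := by rw [Matrix.rank_transpose]; exact hrank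
    exact h2
  have hprin : W.IsPrincipal := (Submodule.finrank_le_one_iff_isPrincipal W).mp hfin
  obtain ⟨v, hv⟩ := hprin.principal
  have hrow : ∀ i : Fin n, ∃ c : ℂ, (fun j => A i j) = c • v := by
    intro i
    have hmem : (fun j => A i j) ∈ W := by
      refine ⟨Pi.single i 1, ?_⟩
      rw [Matrix.mulVecLin_apply]
      funext j
      simp [Matrix.mulVec_single, Matrix.transpose_apply]
    rw [hv] at hmem
    obtain ⟨c, hc⟩ := Submodule.mem_span_singleton.mp hmem
    exact ⟨c, hc.symm⟩
  have hkey : ∀ i k : Fin n, (fun j => A i j) ≠ 0 → (fun j => A k j) ≠ 0 →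
      ∀ j, A k j = A i j := by
    intro i k hi hk
    obtain ⟨c, hc⟩ := hrow i
    obtain ⟨d, hd⟩ := hrow k
    have hc0 : c ≠ 0 := by
      rintro rfl
      rw [zero_smul] at hc
      exact hi hc
    have hkc : ∀ j, A k j = (d / c) * A i j := by
      intro j
      have h1 : A i j = c * v j := congrFun hc j
      have h2 : A k j = d * v j := congrFun hd j
      rw [h1, h2]
      field_simp
    have hj1 : ∃ j, A i j = 1 := by
      by_contra hcon
      push_neg at hcon
      apply hi
      funext j
      rcases h01 i j with h0 | h1
      · exact h0
      · exact absurd h1 (hcon j)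
    obtain ⟨j1, hj1⟩ := hj1
    have he : A k j1 = d / c := by rw [hkc j1, hj1, mul_one]
    rcases h01 k j1 with h0 | h1
    · exfalso
      apply hk
      funext j
      rw [hkc j, ← he, h0, zero_mul]
      rfl
    · intro j
      rw [hkc j, ← he, h1, one_mul]
  -- counting
  set R := Finset.univ.filter (fun i : Fin n => ∃ j, A i j = 1) with hR
  have hone : ∃ p : Fin n × Fin n, A p.1 p.2 = 1 := by
    rw [onesCount_eq] at hm
    obtain ⟨p, hp⟩ := Finset.card_pos.mp hm
    exact ⟨p, (Finset.mem_filter.mp hp).2⟩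
  obtain ⟨p0, hp0⟩ := hone
  have hi0R : p0.1 ∈ R := Finset.mem_filter.mpr ⟨Finset.mem_univ _, ⟨p0.2, hp0⟩⟩
  set b := (Finset.univ.filter fun j => A p0.1 j = 1).card with hb
  have hrow_ne : ∀ i : Fin n, (∃ j, A i j = 1) → (fun j => A i j) ≠ 0 := by
    intro i ⟨j, hj⟩ hcon
    have := congrFun hcon j
    rw [hj] at this
    exact one_ne_zero this
  have hcount : onesCount A = ∑ i : Fin n, (Finset.univ.filter fun j => A i j = 1).card := by
    rw [onesCount_eq, Finset.card_filter, ← Finset.univ_product_univ, Finset.sum_product]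
    exact Finset.sum_congr rfl fun i _ => (Finset.card_filter _ _).symm
  have hsum : ∑ i : Fin n, (Finset.univ.filter fun j => A i j = 1).card
      = ∑ i ∈ R, (Finset.univ.filter fun j => A i j = 1).card := by
    refine (Finset.sum_subset (Finset.subset_univ R) fun i _ hi => ?_).symm
    simp only [hR, Finset.mem_filter, Finset.mem_univ, true_and, not_exists] at hi
    rw [Finset.card_eq_zero]
    refine Finset.filter_eq_empty_iff.mpr fun j _ => hi j
  have hconst : ∀ i ∈ R, (Finset.univ.filter fun j => A i j = 1).card = b := by
    intro i hiR
    simp only [hR, Finset.mem_filter, Finset.mem_univ, true_and] at hiR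
    have h1 : ∀ j, A i j = A p0.1 j := by
      intro j
      exact hkey p0.1 i (hrow_ne _ ⟨p0.2, hp0⟩) (hrow_ne _ hiR) j
    rw [hb]
    congr 1
    refine Finset.filter_congr fun j _ => by rw [h1 j]
  refine ⟨R.card, b, ?_, ?_, ?_, ?_, ?_⟩
  · exact Finset.card_pos.mpr ⟨p0.1, hi0R⟩
  · exact le_trans (Finset.card_le_univ R) (by simp)
  · refine Finset.card_pos.mpr ⟨p0.2, ?_⟩
    exact Finset.mem_filter.mpr ⟨Finset.mem_univ _, hp0⟩
  · exact le_trans (Finset.card_le_univ _) (by simp)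
  · rw [hcount, hsum, Finset.sum_congr rfl hconst, Finset.sum_const, smul_eq_mul]

lemma construct_ab {n a b : ℕ} (ha : a ≤ n) (hb : b ≤ n) :
    ∃ A : Matrix (Fin n) (Fin n) ℂ, (∀ i j, A i j = 0 ∨ A i j = 1) ∧
      onesCount A = a * b ∧ A.rank ≤ 1 := by
  classical
  set u : Fin n → ℂ := fun i => if (i : ℕ) < a then 1 else 0 with hu
  set v : Fin n → ℂ := fun j => if (j : ℕ) < b then 1 else 0 with hv
  refine ⟨Matrix.of fun i j => if ((i : ℕ) < a ∧ (j : ℕ) < b) then (1 : ℂ) else 0, ?_, ?_, ?_⟩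
  · intro i j
    dsimp only [Matrix.of_apply]
    split_ifs
    · right; rfl
    · left; rfl
  · rw [onesCount_eq]
    have h1 : (Finset.univ.filter fun p : Fin n × Fin n =>
        (if ((p.1 : ℕ) < a ∧ (p.2 : ℕ) < b) then (1 : ℂ) else 0) = 1)
        = Finset.univ.filter fun p : Fin n × Fin n => (p.1 : ℕ) < a ∧ (p.2 : ℕ) < b := by
      refine Finset.filter_congr fun p _ => ?_
      split_ifs with h
      · exact iff_of_true rfl h
      · exact iff_of_false (by exact zero_ne_one) h
    have h3 : (Finset.univ.filter fun p : Fin n × Fin n => (p.1 : ℕ) < a ∧ (p.2 : ℕ) < b)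
        = (Finset.univ.filter fun i : Fin n => (i : ℕ) < a) ×ˢ
          (Finset.univ.filter fun j : Fin n => (j : ℕ) < b) := by
      ext p
      simp only [Finset.mem_filter, Finset.mem_product, Finset.mem_univ, true_and]
    simp only [Matrix.of_apply]
    exact (congrArg Finset.card h1).trans (by rw [h3, Finset.card_product, card_filter_lt a ha, card_filter_lt b hb])
  · have h2 : (Matrix.of fun (i : Fin n) (j : Fin n) => if ((i : ℕ) < a ∧ (j : ℕ) < b) then (1 : ℂ) else 0)
        = Matrix.vecMulVec u v := by
      ext i j
      rw [Matrix.vecMulVec_apply, hu, hv]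
      dsimp only [Matrix.of_apply]
      by_cases h1 : (i : ℕ) < a <;> by_cases h2 : (j : ℕ) < b <;> simp [h1, h2]
    rw [h2, Matrix.vecMulVec_eq (Fin 1)]
    refine le_trans (Matrix.rank_mul_le_left _ _) ?_
    refine le_trans (Matrix.rank_le_card_width _) ?_
    simp

lemma exists_01_matrix (n m : ℕ) (hm : m ≤ n ^ 2) :
    ∃ A : Matrix (Fin n) (Fin n) ℂ, (∀ i j, A i j = 0 ∨ A i j = 1) ∧ onesCount A = m := by
  classical
  refine ⟨Matrix.of fun i j =>
    if ((finProdFinEquiv (i, j) : Fin (n * n)) : ℕ) < m then (1 : ℂ) else 0, ?_, ?_⟩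
  · intro i j
    dsimp only [Matrix.of_apply]
    split_ifs
    · right; rfl
    · left; rfl
  · rw [onesCount_eq]
    have h1 : (Finset.univ.filter fun p : Fin n × Fin n =>
        (if ((finProdFinEquiv (p.1, p.2) : Fin (n * n)) : ℕ) < m then (1 : ℂ) else 0) = 1)
        = Finset.univ.filter fun p : Fin n × Fin n =>
          ((finProdFinEquiv (p.1, p.2) : Fin (n * n)) : ℕ) < m := by
      refine Finset.filter_congr fun p _ => ?_
      split_ifs with h
      · exact iff_of_true rfl h
      · exact iff_of_false (by exact zero_ne_one) h
    simp only [Matrix.of_apply]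
    refine (congrArg Finset.card h1).trans ?_
    have h2 : (Finset.univ.filter fun p : Fin n × Fin n =>
        ((finProdFinEquiv (p.1, p.2) : Fin (n * n)) : ℕ) < m).card
        = (Finset.univ.filter fun k : Fin (n * n) => (k : ℕ) < m).card := by
      refine Finset.card_equiv finProdFinEquiv fun p => ?_
      simp only [Finset.mem_filter, Finset.mem_univ, true_and]
    rw [h2, card_filter_lt m (by nlinarith [hm])]

lemma frobNorm_eq_sqrt_onesCount {a b : ℕ} (A : Matrix (Fin a) (Fin b) ℂ)
    (h01 : ∀ i j, A i j = 0 ∨ A i j = 1) :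
    frobNorm A = Real.sqrt (onesCount A) := by
  rw [frobNorm, sum_abs_sq_eq_onesCount A h01]

/-- `ψ_n(m) ≥ √m`, with equality iff `m = a*b` with `a, b ≤ n`. -/
theorem stmt7 (n m : ℕ) (hn : 2 ≤ n) (hm1 : 1 ≤ m) (hm2 : m ≤ n ^ 2) :
    Real.sqrt m ≤ psi n m ∧
    (psi n m = Real.sqrt m ↔
      ∃ a b : ℕ, 1 ≤ a ∧ a ≤ n ∧ 1 ≤ b ∧ b ≤ n ∧ m = a * b) := by
  classical
  set S := {x | ∃ A : Matrix (Fin n) (Fin n) ℂ, (∀ i j, A i j = 0 ∨ A i j = 1) ∧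
    onesCount A = m ∧ traceNorm A = x} with hS
  have hlow : ∀ x ∈ S, Real.sqrt m ≤ x := by
    rintro x ⟨A, h01, hcnt, rfl⟩
    calc Real.sqrt m = frobNorm A := by rw [frobNorm_eq_sqrt_onesCount A h01, hcnt]
      _ ≤ traceNorm A := frobNorm_le_traceNorm A
  have hne : S.Nonempty := by
    obtain ⟨A, h01, hcnt⟩ := exists_01_matrix n m hm2
    exact ⟨traceNorm A, A, h01, hcnt, rfl⟩
  have hfinite : S.Finite := by
    have hT : ({A : Matrix (Fin n) (Fin n) ℂ | ∀ i j, A i j = 0 ∨ A i j = 1}).Finite := by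
      refine Set.Finite.subset (Set.finite_range
        (fun f : Fin n → Fin n → Bool => Matrix.of fun i j => if f i j then (1 : ℂ) else 0)) ?_
      intro A hA
      refine ⟨fun i j => if A i j = 1 then true else false, ?_⟩
      ext i j
      dsimp only [Matrix.of_apply]
      rcases hA i j with h | h <;> simp [h]
    refine Set.Finite.subset (hT.image traceNorm) ?_
    rintro x ⟨A, h01, hcnt, rfl⟩
    exact ⟨A, h01, rfl⟩
  have hlb : Real.sqrt m ≤ psi n m := le_csInf hne hlow
  refine ⟨hlb, ?_, ?_⟩
  · intro heq
    have hmem : sInf S ∈ S := Set.Nonempty.csInf_mem hne hfinite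
    rw [show sInf S = psi n m from rfl, heq] at hmem
    obtain ⟨A, h01, hcnt, htr⟩ := hmem
    have hsum2 : ∑ i, singVals A i ^ 2 = (m : ℝ) := by
      have h1 : ∀ i, singVals A i ^ 2
          = (Matrix.isHermitian_conjTranspose_mul_self A).eigenvalues i := singVals_sq A
      rw [Finset.sum_congr rfl fun i _ => h1 i, sum_eigs_eq,
        sum_abs_sq_eq_onesCount A h01, hcnt]
    have hsq : (∑ i, singVals A i) ^ 2 = ∑ i, singVals A i ^ 2 := by
      rw [hsum2]
      have : (∑ i, singVals A i) = Real.sqrt m := htr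
      rw [this, Real.sq_sqrt (Nat.cast_nonneg m)]
    have hrank : A.rank ≤ 1 := rank_le_one_of_sq_eq A hsq
    obtain ⟨a, b, ha1, ha2, hb1, hb2, hab⟩ := exists_ab A h01 hrank (by rw [hcnt]; exact hm1)
    exact ⟨a, b, ha1, ha2, hb1, hb2, by rw [← hcnt, hab]⟩
  · rintro ⟨a, b, ha1, ha2, hb1, hb2, rfl⟩
    obtain ⟨A, h01, hcnt, hrank⟩ := construct_ab ha2 hb2
    have htr : traceNorm A = Real.sqrt ((a * b : ℕ) : ℝ) := by
      rw [traceNorm_eq_frobNorm_of_rank_le_one A hrank,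
        frobNorm_eq_sqrt_onesCount A h01, hcnt]
    have hmem : Real.sqrt ((a * b : ℕ) : ℝ) ∈ S := ⟨A, h01, hcnt, htr⟩
    have hub : psi n (a * b) ≤ Real.sqrt ((a * b : ℕ) : ℝ) :=
      csInf_le ⟨Real.sqrt ((a * b : ℕ) : ℝ), hlow⟩ hmem
    exact le_antisymm hub hlb
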